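/- Let E be a finite-dimensional real normed vector space, U ⊆ E an open set, and ω : U → (E →L[ℝ] ℝ) a continuously differentiable 1-form that is closed in the sense that its derivative is symmetric: for every x ∈ U and all v, w ∈ E, (fderiv ω x v) w = (fderiv ω x w) v. Let H : ℝ × ℝ → E be a C¹ map with H(s, t) ∈ U for all (s, t) ∈ [0,1] × [0,1] and H(s, 0) = H(s, 1) for all s ∈ [0,1] (a free homotopy of loops in U). Then the loop integrals at the two ends of the homotopy agree: ∫₀¹ ω(H(0,t)) (∂H/∂t (0,t)) dt = ∫₀¹ ω(H(1,t)) (∂H/∂t (1,t)) dt. (Homotopy invariance of the integral of a closed 1-form, which makes γ ↦ ∫_γ α a well-defined homomorphism u : π₁ → ℝ.) -/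

import Mathlib

set_option maxHeartbeats 1000000

open Metric Set intervalIntegral MeasureTheory Interval

lemma exists_primitive {E : Type*} [NormedAddCommGroup E] [NormedSpace ℝ E]
    [FiniteDimensional ℝ E]
    (U : Set E) (hU : IsOpen U) (ω : E → (E →L[ℝ] ℝ)) (hω : ContDiffOn ℝ 1 ω U)
    (hclosed : ∀ x ∈ U, ∀ v w : E, fderiv ℝ ω x v w = fderiv ℝ ω x w v)
    (a : E) (ε : ℝ) (hBU : ball a ε ⊆ U) :
    ∃ f : E → ℝ, ∀ x ∈ ball a ε, HasFDerivAt f (ω x) x := by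
  have hωc : ContinuousOn ω U := hω.continuousOn
  have hω'c : ContinuousOn (fderiv ℝ ω) U := hω.continuousOn_fderiv_of_isOpen hU le_rfl
  refine ⟨fun x => ∫ t in (0:ℝ)..1, ω (a + t • (x - a)) (x - a), fun x₀ hx₀ => ?_⟩
  set ρ : ℝ := (ε - ‖x₀ - a‖) / 2 with hρdef
  have hx₀n : ‖x₀ - a‖ < ε := by rwa [mem_ball, dist_eq_norm] at hx₀
  have hρ : 0 < ρ := by simp only [hρdef]; linarith
  set R : ℝ := ‖x₀ - a‖ + ρ with hRdef
  have hRε : R < ε := by simp only [hRdef, hρdef]; linarith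
  have hR0 : 0 ≤ R := by positivity
  have hmem : ∀ x ∈ ball x₀ ρ, ∀ t ∈ Icc (0:ℝ) 1, a + t • (x - a) ∈ closedBall a R := by
    intro x hx t ht
    have hxa : ‖x - a‖ ≤ R := by
      have := norm_sub_le_norm_sub_add_norm_sub x x₀ a
      rw [mem_ball, dist_eq_norm] at hx
      simp only [hRdef]; linarith
    rw [mem_closedBall, dist_eq_norm, add_sub_cancel_left, norm_smul]
    calc ‖t‖ * ‖x - a‖ ≤ 1 * ‖x - a‖ := by
          apply mul_le_mul_of_nonneg_right _ (norm_nonneg _)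
          rw [Real.norm_eq_abs, abs_le]; constructor <;> linarith [ht.1, ht.2]
      _ ≤ R := by simpa using hxa
  have hSU : closedBall a R ⊆ U := fun y hy => hBU (lt_of_le_of_lt (mem_closedBall.1 hy) hRε)
  obtain ⟨M₀, hM₀⟩ := (isCompact_closedBall a R).exists_bound_of_continuousOn (hωc.mono hSU)
  obtain ⟨M₁, hM₁⟩ := (isCompact_closedBall a R).exists_bound_of_continuousOn (E := E →L[ℝ] E →L[ℝ] ℝ) (hω'c.mono hSU)
  have hM₁0 : 0 ≤ M₁ := le_trans (norm_nonneg _) (hM₁ a (by simp [hR0]))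
  set F : E → ℝ → ℝ := fun x t => ω (a + t • (x - a)) (x - a) with hFdef
  set F' : E → ℝ → (E →L[ℝ] ℝ) := fun x t =>
    ω (a + t • (x - a)) + fderiv ℝ ω (a + t • (x - a)) (t • (x - a)) with hF'def
  have hIsub : Ι (0:ℝ) 1 ⊆ Icc (0:ℝ) 1 := by rw [uIoc_of_le zero_le_one]; exact Ioc_subset_Icc_self
  have hdiff : ∀ t ∈ Ι (0:ℝ) 1, ∀ x ∈ ball x₀ ρ, HasFDerivAt (fun x => F x t) (F' x t) x := by
    intro t ht x hx
    have hyU : a + t • (x - a) ∈ U := hSU (hmem x hx t (hIsub ht))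
    have hu : HasFDerivAt (fun x : E => x - a) (1 : E →L[ℝ] E) x :=
      (hasFDerivAt_id x).sub_const a
    have hc : HasFDerivAt (fun x : E => a + t • (x - a)) (t • (1 : E →L[ℝ] E)) x := by
      simpa using (hu.const_smul t).const_add a
    have hωd : HasFDerivAt ω (fderiv ℝ ω (a + t • (x - a))) (a + t • (x - a)) :=
      (hω.differentiableOn one_ne_zero).differentiableAt (hU.mem_nhds hyU) |>.hasFDerivAt
    have hcomp : HasFDerivAt (fun x => ω (a + t • (x - a)))
        ((fderiv ℝ ω (a + t • (x - a))).comp (t • (1 : E →L[ℝ] E))) x := hωd.comp x hc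
    have h := hcomp.clm_apply hu
    refine h.congr_fderiv (Eq.symm ?_)
    ext v
    simp only [hF'def, ContinuousLinearMap.add_apply, ContinuousLinearMap.coe_comp',
      Function.comp_apply, ContinuousLinearMap.flip_apply, ContinuousLinearMap.smul_apply,
      ContinuousLinearMap.one_apply, ContinuousLinearMap.coe_smul', Pi.smul_apply,
      _root_.map_smul, smul_eq_mul]
    rw [hclosed _ hyU v (x - a)]
  have hbound : ∀ t ∈ Ι (0:ℝ) 1, ∀ x ∈ ball x₀ ρ, ‖F' x t‖ ≤ M₀ + M₁ * R := by
    intro t ht x hx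
    have htI := hIsub ht
    have hyS : a + t • (x - a) ∈ closedBall a R := hmem x hx t htI
    have h1 : ‖ω (a + t • (x - a))‖ ≤ M₀ := hM₀ _ hyS
    have htx : ‖t • (x - a)‖ ≤ R := by
      have := hyS
      rwa [mem_closedBall, dist_eq_norm, add_sub_cancel_left] at this
    have h2 : ‖fderiv ℝ ω (a + t • (x - a)) (t • (x - a))‖ ≤ M₁ * R :=
      le_trans (ContinuousLinearMap.le_opNorm _ _)
        (mul_le_mul (hM₁ _ hyS) htx (norm_nonneg _) hM₁0)
    calc ‖F' x t‖ ≤ ‖ω (a + t • (x - a))‖ + ‖fderiv ℝ ω (a + t • (x - a)) (t • (x - a))‖ :=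
          norm_add_le _ _
      _ ≤ M₀ + M₁ * R := add_le_add h1 h2
  have hγ : ∀ x : E, Continuous (fun t : ℝ => a + t • (x - a)) := fun x =>
    continuous_const.add (continuous_id.smul continuous_const)
  have hcont : ∀ x ∈ ball x₀ ρ, ContinuousOn (fun t => F x t) (Icc 0 1) := by
    intro x hx
    exact (hωc.comp (hγ x).continuousOn (fun t ht => hSU (hmem x hx t ht))).clm_apply
      continuousOn_const
  have hx₀b : x₀ ∈ ball x₀ ρ := mem_ball_self hρ
  have hcont' : ContinuousOn (F' x₀) (Icc 0 1) := by
    simp only [hF'def]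
    apply ContinuousOn.add
    · exact hωc.comp (hγ x₀).continuousOn (fun t ht => hSU (hmem x₀ hx₀b t ht))
    · exact (hω'c.comp (hγ x₀).continuousOn (fun t ht => hSU (hmem x₀ hx₀b t ht))).clm_apply
        (continuous_id.smul continuous_const).continuousOn
  have hmeas : ∀ᶠ x in nhds x₀, AEStronglyMeasurable (F x) (volume.restrict (Ι (0:ℝ) 1)) :=
    Filter.eventually_of_mem (ball_mem_nhds x₀ hρ) (fun x hx =>
      ((hcont x hx).mono hIsub).aestronglyMeasurable measurableSet_uIoc)
  have hFint : IntervalIntegrable (F x₀) volume 0 1 :=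
    ((hcont x₀ hx₀b).mono (by rw [uIcc_of_le zero_le_one])).intervalIntegrable
  have hF'meas : AEStronglyMeasurable (F' x₀) (volume.restrict (Ι (0:ℝ) 1)) :=
    (hcont'.mono hIsub).aestronglyMeasurable measurableSet_uIoc
  have key : HasFDerivAt (fun x => ∫ t in (0:ℝ)..1, F x t) (∫ t in (0:ℝ)..1, F' x₀ t) x₀ :=
    hasFDerivAt_integral_of_dominated_of_fderiv_le (ball_mem_nhds x₀ hρ) hmeas hFint hF'meas
      (Filter.Eventually.of_forall (fun t ht x hx => hbound t ht x hx))
      intervalIntegrable_const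
      (Filter.Eventually.of_forall (fun t ht x hx => hdiff t ht x hx))
  have hFTC : (∫ t in (0:ℝ)..1, F' x₀ t) = ω x₀ := by
    have hg : ∀ t ∈ uIcc (0:ℝ) 1,
        HasDerivAt (fun t : ℝ => t • ω (a + t • (x₀ - a))) (F' x₀ t) t := by
      intro t ht
      rw [uIcc_of_le zero_le_one] at ht
      have hyU : a + t • (x₀ - a) ∈ U := hSU (hmem x₀ hx₀b t ht)
      have h1 : HasDerivAt (fun t : ℝ => a + t • (x₀ - a)) (x₀ - a) t := by
        simpa using ((hasDerivAt_id t).smul_const (x₀ - a)).const_add a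
      have hωd : HasFDerivAt ω (fderiv ℝ ω (a + t • (x₀ - a))) (a + t • (x₀ - a)) :=
        (hω.differentiableOn one_ne_zero).differentiableAt (hU.mem_nhds hyU) |>.hasFDerivAt
      have h2 : HasDerivAt (fun t : ℝ => ω (a + t • (x₀ - a)))
          (fderiv ℝ ω (a + t • (x₀ - a)) (x₀ - a)) t := hωd.comp_hasDerivAt t h1
      have h3 := (hasDerivAt_id t).smul h2
      simp only [hF'def]
      refine h3.congr_deriv (Eq.symm ?_)
      ext v
      simp only [ContinuousLinearMap.add_apply, ContinuousLinearMap.smul_apply,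
        _root_.map_smul, smul_eq_mul, one_smul, id_eq]
      ring
    have hint : IntervalIntegrable (F' x₀) volume 0 1 :=
      (hcont'.mono (by rw [uIcc_of_le zero_le_one])).intervalIntegrable
    rw [integral_eq_sub_of_hasDerivAt hg hint]
    simp
  rw [hFTC] at key
  exact key

lemma path_integral_eq {E : Type*} [NormedAddCommGroup E] [NormedSpace ℝ E]
    (ω : E → (E →L[ℝ] ℝ)) (s : Set E) (hωc : ContinuousOn ω s)
    (H : ℝ × ℝ → E) (hH : ContDiff ℝ 1 H)
    (f : E → ℝ) (hf : ∀ x ∈ s, HasFDerivAt f (ω x) x)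
    (γ γ' : ℝ → ℝ × ℝ) (hγ : ∀ t, HasDerivAt γ (γ' t) t)
    (hγc : Continuous γ) (hγ'c : Continuous γ') (c d : ℝ)
    (hmap : ∀ t ∈ uIcc c d, H (γ t) ∈ s) :
    ∫ t in c..d, ω (H (γ t)) (fderiv ℝ H (γ t) (γ' t)) = f (H (γ d)) - f (H (γ c)) := by
  have hder : ∀ t ∈ uIcc c d,
      HasDerivAt (fun t => f (H (γ t))) (ω (H (γ t)) (fderiv ℝ H (γ t) (γ' t))) t := by
    intro t ht
    have h1 : HasDerivAt (fun t => H (γ t)) (fderiv ℝ H (γ t) (γ' t)) t :=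
      (hH.differentiable one_ne_zero (γ t)).hasFDerivAt.comp_hasDerivAt t (hγ t)
    exact (hf _ (hmap t ht)).comp_hasDerivAt t h1
  have hint : ContinuousOn (fun t => ω (H (γ t)) (fderiv ℝ H (γ t) (γ' t))) (uIcc c d) :=
    (hωc.comp ((hH.continuous.comp hγc).continuousOn) hmap).clm_apply
      (((hH.continuous_fderiv one_ne_zero).comp hγc).clm_apply hγ'c).continuousOn
  exact integral_eq_sub_of_hasDerivAt hder hint.intervalIntegrable

lemma rect_eq {E : Type*} [NormedAddCommGroup E] [NormedSpace ℝ E]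
    [FiniteDimensional ℝ E]
    (U : Set E) (hU : IsOpen U) (ω : E → (E →L[ℝ] ℝ)) (hω : ContDiffOn ℝ 1 ω U)
    (hclosed : ∀ x ∈ U, ∀ v w : E, fderiv ℝ ω x v w = fderiv ℝ ω x w v)
    (H : ℝ × ℝ → E) (hH : ContDiff ℝ 1 H)
    (a : E) (ε : ℝ) (hBU : ball a ε ⊆ U) (p q c d : ℝ)
    (hmap : ∀ z ∈ uIcc p q ×ˢ uIcc c d, H z ∈ ball a ε) :
    (∫ t in c..d, ω (H (q, t)) (fderiv ℝ H (q, t) (0, 1))) -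
      (∫ t in c..d, ω (H (p, t)) (fderiv ℝ H (p, t) (0, 1))) =
    (∫ s in p..q, ω (H (s, d)) (fderiv ℝ H (s, d) (1, 0))) -
      (∫ s in p..q, ω (H (s, c)) (fderiv ℝ H (s, c) (1, 0))) := by
  obtain ⟨f, hf⟩ := exists_primitive U hU ω hω hclosed a ε hBU
  have hωc : ContinuousOn ω (ball a ε) := hω.continuousOn.mono hBU
  have e1 : ∫ t in c..d, ω (H (q, t)) (fderiv ℝ H (q, t) (0, 1))
      = f (H (q, d)) - f (H (q, c)) := by
    have := path_integral_eq ω (ball a ε) hωc H hH f hf (fun t => (q, t))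
      (fun _ => ((0:ℝ), (1:ℝ))) (fun t => (hasDerivAt_const t q).prodMk (hasDerivAt_id t))
      (continuous_const.prodMk continuous_id) continuous_const c d
      (fun t ht => hmap (q, t) (mk_mem_prod right_mem_uIcc ht))
    simpa using this
  have e2 : ∫ t in c..d, ω (H (p, t)) (fderiv ℝ H (p, t) (0, 1))
      = f (H (p, d)) - f (H (p, c)) := by
    have := path_integral_eq ω (ball a ε) hωc H hH f hf (fun t => (p, t))
      (fun _ => ((0:ℝ), (1:ℝ))) (fun t => (hasDerivAt_const t p).prodMk (hasDerivAt_id t))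
      (continuous_const.prodMk continuous_id) continuous_const c d
      (fun t ht => hmap (p, t) (mk_mem_prod left_mem_uIcc ht))
    simpa using this
  have e3 : ∫ s in p..q, ω (H (s, d)) (fderiv ℝ H (s, d) (1, 0))
      = f (H (q, d)) - f (H (p, d)) := by
    have := path_integral_eq ω (ball a ε) hωc H hH f hf (fun s => (s, d))
      (fun _ => ((1:ℝ), (0:ℝ))) (fun s => (hasDerivAt_id s).prodMk (hasDerivAt_const s d))
      (continuous_id.prodMk continuous_const) continuous_const p q
      (fun s hs => hmap (s, d) (mk_mem_prod hs right_mem_uIcc))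
    simpa using this
  have e4 : ∫ s in p..q, ω (H (s, c)) (fderiv ℝ H (s, c) (1, 0))
      = f (H (q, c)) - f (H (p, c)) := by
    have := path_integral_eq ω (ball a ε) hωc H hH f hf (fun s => (s, c))
      (fun _ => ((1:ℝ), (0:ℝ))) (fun s => (hasDerivAt_id s).prodMk (hasDerivAt_const s c))
      (continuous_id.prodMk continuous_const) continuous_const p q
      (fun s hs => hmap (s, c) (mk_mem_prod hs left_mem_uIcc))
    simpa using this
  rw [e1, e2, e3, e4]; ring

lemma loop_fderiv_eq {E : Type*} [NormedAddCommGroup E] [NormedSpace ℝ E]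
    (H : ℝ × ℝ → E) (hH : ContDiff ℝ 1 H)
    (hHloop : ∀ s ∈ Set.Icc (0 : ℝ) 1, H (s, 0) = H (s, 1)) :
    ∀ s ∈ Set.Icc (0 : ℝ) 1,
      fderiv ℝ H (s, 0) (1, 0) = fderiv ℝ H (s, 1) (1, 0) := by
  have hc0 : Continuous fun s : ℝ => fderiv ℝ H (s, (0:ℝ)) ((1:ℝ), (0:ℝ)) :=
    (((hH.continuous_fderiv one_ne_zero).comp
      (continuous_id.prodMk continuous_const)).clm_apply continuous_const)
  have hc1 : Continuous fun s : ℝ => fderiv ℝ H (s, (1:ℝ)) ((1:ℝ), (0:ℝ)) :=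
    (((hH.continuous_fderiv one_ne_zero).comp
      (continuous_id.prodMk continuous_const)).clm_apply continuous_const)
  have hC : IsClosed {s : ℝ | fderiv ℝ H (s, 0) (1, 0) = fderiv ℝ H (s, 1) (1, 0)} :=
    isClosed_eq hc0 hc1
  have hIoo : Ioo (0:ℝ) 1 ⊆ {s : ℝ | fderiv ℝ H (s, 0) (1, 0) = fderiv ℝ H (s, 1) (1, 0)} := by
    intro s hs
    have h0 : HasDerivAt (fun s : ℝ => H (s, 0)) (fderiv ℝ H (s, 0) (1, 0)) s :=
      (hH.differentiable one_ne_zero _).hasFDerivAt.comp_hasDerivAt s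
        ((hasDerivAt_id s).prodMk (hasDerivAt_const s 0))
    have h1 : HasDerivAt (fun s : ℝ => H (s, 1)) (fderiv ℝ H (s, 1) (1, 0)) s :=
      (hH.differentiable one_ne_zero _).hasFDerivAt.comp_hasDerivAt s
        ((hasDerivAt_id s).prodMk (hasDerivAt_const s 1))
    have heq : (fun s : ℝ => H (s, 1)) =ᶠ[nhds s] (fun s : ℝ => H (s, 0)) :=
      Filter.eventually_of_mem (Ioo_mem_nhds hs.1 hs.2)
        (fun x hx => (hHloop x ⟨le_of_lt hx.1, le_of_lt hx.2⟩).symm)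
    have h0' : HasDerivAt (fun s : ℝ => H (s, 1)) (fderiv ℝ H (s, 0) (1, 0)) s :=
      h0.congr_of_eventuallyEq heq
    exact h0'.unique h1
  intro s hs
  have hsub := closure_minimal hIoo hC
  rw [closure_Ioo (by norm_num : (0:ℝ) ≠ 1)] at hsub
  exact hsub hs

/-- Homotopy invariance of the line integral of a closed 1-form: if
`ω : U → (E →L[ℝ] ℝ)` is a `C¹` 1-form on an open set `U` of a
finite-dimensional real normed space whose derivative is symmetric
(`dω = 0`), and `H : ℝ × ℝ → E` is a `C¹` free homotopy of loops in `U`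
(defined on `[0,1] × [0,1]`, with `H s 0 = H s 1`), then the loop integrals
at the two ends of the homotopy agree.  This makes `γ ↦ ∫_γ α` a
well-defined homomorphism `u : π₁ → ℝ`. -/
theorem closed_one_form_loop_integral_homotopy_invariant
    {E : Type*} [NormedAddCommGroup E] [NormedSpace ℝ E] [FiniteDimensional ℝ E]
    (U : Set E) (hU : IsOpen U)
    (ω : E → (E →L[ℝ] ℝ)) (hω : ContDiffOn ℝ 1 ω U)
    (hclosed : ∀ x ∈ U, ∀ v w : E, fderiv ℝ ω x v w = fderiv ℝ ω x w v)
    (H : ℝ × ℝ → E) (hH : ContDiff ℝ 1 H)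
    (hHU : ∀ p ∈ Set.Icc (0 : ℝ) 1 ×ˢ Set.Icc (0 : ℝ) 1, H p ∈ U)
    (hHloop : ∀ s ∈ Set.Icc (0 : ℝ) 1, H (s, 0) = H (s, 1)) :
    ∫ t in (0 : ℝ)..1, ω (H (0, t)) (fderiv ℝ H (0, t) (0, 1)) =
      ∫ t in (0 : ℝ)..1, ω (H (1, t)) (fderiv ℝ H (1, t) (0, 1)) := by
  set K : Set (ℝ × ℝ) := Set.Icc (0:ℝ) 1 ×ˢ Set.Icc (0:ℝ) 1 with hKdef
  have hK : IsCompact K := isCompact_Icc.prod isCompact_Icc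
  obtain ⟨ε, hε, hthick⟩ := (hK.image hH.continuous).exists_thickening_subset_open hU
    (by rintro _ ⟨z, hz, rfl⟩; exact hHU z hz)
  have hball : ∀ z ∈ K, ball (H z) ε ⊆ U := fun z hz =>
    (ball_subset_thickening (mem_image_of_mem H hz) ε).trans hthick
  have hUC := hK.uniformContinuousOn_of_continuous hH.continuous.continuousOn
  rw [Metric.uniformContinuousOn_iff] at hUC
  obtain ⟨δ, hδ, hδ'⟩ := hUC ε hε
  obtain ⟨n, hn⟩ := exists_nat_gt (1/δ)
  have hn0 : 0 < (n:ℝ) := lt_of_le_of_lt (by positivity) hn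
  have h1n : (0:ℝ) ≤ 1/n := by positivity
  have hinv : (1:ℝ)/n < δ := by
    rw [div_lt_iff₀ hn0]
    have := (div_lt_iff₀ hδ).1 hn
    linarith [mul_comm δ (n:ℝ)]
  set sk : ℕ → ℝ := fun k => (k:ℝ)/n with hskdef
  have hsk0 : sk 0 = 0 := by simp [hskdef]
  have hskn : sk n = 1 := div_self hn0.ne'
  have hskmono : ∀ k : ℕ, sk k ≤ sk (k+1) := fun k =>
    (div_le_div_iff_of_pos_right hn0).mpr (by push_cast; linarith)
  have hskstep : ∀ k : ℕ, sk (k+1) = sk k + 1/n := fun k => by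
    simp only [hskdef]; push_cast; rw [add_div]
  have hsknn : ∀ k : ℕ, 0 ≤ sk k := fun k => by positivity
  have hskle1 : ∀ k : ℕ, k ≤ n → sk k ≤ 1 := fun k hk => by
    rw [hskdef, div_le_one hn0]; exact_mod_cast hk
  have hskmem : ∀ k : ℕ, k ≤ n → sk k ∈ Set.Icc (0:ℝ) 1 := fun k hk =>
    ⟨hsknn k, hskle1 k hk⟩
  -- the grid property
  have hgrid : ∀ k i : ℕ, k < n → i < n →
      ∀ z ∈ uIcc (sk k) (sk (k+1)) ×ˢ uIcc (sk i) (sk (i+1)),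
        H z ∈ ball (H (sk k, sk i)) ε := by
    intro k i hk hi z hz
    rw [uIcc_of_le (hskmono k), uIcc_of_le (hskmono i), Set.mem_prod] at hz
    obtain ⟨hz1, hz2⟩ := hz
    have hzK : z ∈ K := by
      rw [hKdef, Set.mem_prod]
      exact ⟨⟨le_trans (hsknn k) hz1.1, le_trans hz1.2 (hskle1 (k+1) hk)⟩,
        ⟨le_trans (hsknn i) hz2.1, le_trans hz2.2 (hskle1 (i+1) hi)⟩⟩
    have hcK : ((sk k, sk i) : ℝ × ℝ) ∈ K := by
      rw [hKdef, Set.mem_prod]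
      exact ⟨hskmem k hk.le, hskmem i hi.le⟩
    have hd1 : dist z.1 (sk k) < δ := by
      rw [Real.dist_eq]
      have := hskstep k
      refine lt_of_le_of_lt (abs_le.mpr ⟨by linarith [hz1.1, h1n], by linarith [hz1.2]⟩) hinv
    have hd2 : dist z.2 (sk i) < δ := by
      rw [Real.dist_eq]
      have := hskstep i
      refine lt_of_le_of_lt (abs_le.mpr ⟨by linarith [hz2.1, h1n], by linarith [hz2.2]⟩) hinv
    have hdist : dist z ((sk k, sk i) : ℝ × ℝ) < δ := by
      rw [Prod.dist_eq]; exact max_lt hd1 hd2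
    exact mem_ball.mpr (hδ' z hzK (sk k, sk i) hcK hdist)
  -- continuity of the t-integrand
  have hcontT : ∀ q ∈ Set.Icc (0:ℝ) 1,
      ContinuousOn (fun t => ω (H (q, t)) (fderiv ℝ H (q, t) (0, 1))) (Set.Icc 0 1) := by
    intro q hq
    have hγ : Continuous fun t : ℝ => ((q, t) : ℝ × ℝ) := continuous_const.prodMk continuous_id
    exact (hω.continuousOn.comp (hH.continuous.comp hγ).continuousOn
        (fun t ht => hHU (q, t) ⟨hq, ht⟩)).clm_apply
      (((hH.continuous_fderiv one_ne_zero).comp hγ).clm_apply continuous_const).continuousOn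
  set T : ℕ → ℝ := fun k =>
    ∫ t in (0:ℝ)..1, ω (H (sk k, t)) (fderiv ℝ H (sk k, t) (0, 1)) with hTdef
  have hsplit : ∀ k : ℕ, k ≤ n →
      T k = ∑ i ∈ Finset.range n,
        ∫ t in (sk i)..(sk (i+1)), ω (H (sk k, t)) (fderiv ℝ H (sk k, t) (0, 1)) := by
    intro k hk
    rw [hTdef]
    have := intervalIntegral.sum_integral_adjacent_intervals (μ := volume) (a := sk) (n := n)
      (f := fun t => ω (H (sk k, t)) (fderiv ℝ H (sk k, t) (0, 1))) ?_
    · rw [this, hsk0, hskn]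
    · intro i hi
      apply ContinuousOn.intervalIntegrable
      apply (hcontT (sk k) (hskmem k hk)).mono
      rw [uIcc_of_le (hskmono i)]
      exact Set.Icc_subset_Icc (hsknn i) (hskle1 (i+1) hi)
  have hstep : ∀ k : ℕ, k < n → T (k+1) = T k := by
    intro k hk
    have hBU : ∀ i : ℕ, i < n → ball (H (sk k, sk i)) ε ⊆ U := fun i hi =>
      hball _ (by rw [hKdef, Set.mem_prod]; exact ⟨hskmem k hk.le, hskmem i hi.le⟩)
    have hterm : ∀ i ∈ Finset.range n,
        (∫ t in (sk i)..(sk (i+1)), ω (H (sk (k+1), t)) (fderiv ℝ H (sk (k+1), t) (0, 1))) -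
          (∫ t in (sk i)..(sk (i+1)), ω (H (sk k, t)) (fderiv ℝ H (sk k, t) (0, 1))) =
        (∫ s in (sk k)..(sk (k+1)), ω (H (s, sk (i+1))) (fderiv ℝ H (s, sk (i+1)) (1, 0))) -
          (∫ s in (sk k)..(sk (k+1)), ω (H (s, sk i)) (fderiv ℝ H (s, sk i) (1, 0))) := by
      intro i hi
      rw [Finset.mem_range] at hi
      exact rect_eq U hU ω hω hclosed H hH (H (sk k, sk i)) ε (hBU i hi)
        (sk k) (sk (k+1)) (sk i) (sk (i+1)) (hgrid k i hk hi)
    have hsum : T (k+1) - T k =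
        ∑ i ∈ Finset.range n,
          ((∫ s in (sk k)..(sk (k+1)), ω (H (s, sk (i+1))) (fderiv ℝ H (s, sk (i+1)) (1, 0))) -
            (∫ s in (sk k)..(sk (k+1)), ω (H (s, sk i)) (fderiv ℝ H (s, sk i) (1, 0)))) := by
      rw [hsplit (k+1) hk, hsplit k hk.le, ← Finset.sum_sub_distrib]
      exact Finset.sum_congr rfl hterm
    rw [Finset.sum_range_sub
      (f := fun i => ∫ s in (sk k)..(sk (k+1)), ω (H (s, sk i)) (fderiv ℝ H (s, sk i) (1, 0)))]
      at hsum
    have hend : (∫ s in (sk k)..(sk (k+1)), ω (H (s, sk n)) (fderiv ℝ H (s, sk n) (1, 0))) =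
        ∫ s in (sk k)..(sk (k+1)), ω (H (s, sk 0)) (fderiv ℝ H (s, sk 0) (1, 0)) := by
      rw [hskn, hsk0]
      apply intervalIntegral.integral_congr
      intro s hs
      rw [uIcc_of_le (hskmono k)] at hs
      have hsI : s ∈ Set.Icc (0:ℝ) 1 :=
        ⟨le_trans (hsknn k) hs.1, le_trans hs.2 (hskle1 (k+1) hk)⟩
      show ω (H (s, 1)) (fderiv ℝ H (s, 1) (1, 0)) = ω (H (s, 0)) (fderiv ℝ H (s, 0) (1, 0))
      rw [← hHloop s hsI, ← loop_fderiv_eq H hH hHloop s hsI]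
    rw [hend, sub_self] at hsum
    linarith
  have hTn : ∀ k : ℕ, k ≤ n → T k = T 0 := by
    intro k
    induction k with
    | zero => intro _; rfl
    | succ m ih =>
      intro h
      rw [hstep m (Nat.lt_of_succ_le h)]
      exact ih (Nat.le_of_succ_le h)
  have h0 : T 0 = ∫ t in (0:ℝ)..1, ω (H (0, t)) (fderiv ℝ H (0, t) (0, 1)) := by
    simp only [hTdef, hsk0]
  have h1 : T n = ∫ t in (0:ℝ)..1, ω (H (1, t)) (fderiv ℝ H (1, t) (0, 1)) := by
    simp only [hTdef, hskn]
  rw [← h0, ← h1]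
  exact (hTn n le_rfl).symm
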